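/- Let Omega/Lambda be a vertical r-strip of superpartitions such that every row contains at most one marked change (no row is simultaneously a circle-square row and a new-circle row). Let tilde-sigma be a permutation interchanging the circle-square rows with the new-circle rows and fixing all other rows, and let tilde-J be the union of the circle-square rows and the plain-square rows. Then with sigma = w^{-1} tilde-sigma w and J = w^{-1} tilde-sigma(tilde-J), one has J subseteq [m+1, N]. -/

import Mathlib

/- STATEMENT 15: For a vertical r-strip Ω/Λ of type I (no row is simultaneously a
   circle-square row and a new-circle row), with `σ̃` a permutation interchanging
   the circle-square rows and the new-circle rows and fixing all other rows, and
   `J̃` the union of the circle-square rows and the plain-square rows (i.e. the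
   rows of Ω*/Λ*), the set `J = w⁻¹ σ̃ (J̃)` is contained in `[m+1, N]`
   (0-based: all its elements `j` satisfy `m ≤ j`).
   Here `(Λ, w)` generates a superevaluation, so `w([m])` is the set of rows of
   `Λ` containing circles.  Diagrams are encoded by the partitions
   `Λs = Λ*, Λc = Λ^{⊛}, Ωs = Ω*, Ωc = Ω^{⊛}`; row `i` is a circle-square row iff
   `Ωs i = Λs i + 1 ∧ Λc i = Λs i + 1`, and a new-circle row iff
   `Ωc i = Ωs i + 1 ∧ ¬(Λc i = Λs i + 1 ∧ Ωs i = Λs i)`. -/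

open Finset

theorem typeI_strip_J_in_upper_range (N m r : ℕ) (hm : m ≤ N)
    (Λs Λc Ωs Ωc : Fin N → ℕ)
    (hΛsA : Antitone Λs) (hΛcA : Antitone Λc) (hΩsA : Antitone Ωs) (hΩcA : Antitone Ωc)
    (hΛ01 : ∀ i, Λc i = Λs i ∨ Λc i = Λs i + 1)
    (hΛm : (∑ i, Λc i) = (∑ i, Λs i) + m)
    (hΩ01 : ∀ i, Ωc i = Ωs i ∨ Ωc i = Ωs i + 1)
    (hΩm : (∑ i, Ωc i) = (∑ i, Ωs i) + m)
    (hs01 : ∀ i, Ωs i = Λs i ∨ Ωs i = Λs i + 1)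
    (hsr : (∑ i, Ωs i) = (∑ i, Λs i) + r)
    (hc01 : ∀ i, Ωc i = Λc i ∨ Ωc i = Λc i + 1)
    (hcr : (∑ i, Ωc i) = (∑ i, Λc i) + r)
    (w σt : Equiv.Perm (Fin N))
    -- the circles of Λ sit exactly in the rows w([m]):
    (hw : (Finset.univ : Finset (Fin N)).filter (fun i => Λc i = Λs i + 1)
        = ((Finset.univ : Finset (Fin N)).filter (fun j : Fin N => (j : ℕ) < m)).image w)
    -- type I: no row is both a circle-square row and a new-circle row:
    (htypeI : ∀ i, ¬((Ωs i = Λs i + 1 ∧ Λc i = Λs i + 1)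
        ∧ (Ωc i = Ωs i + 1 ∧ ¬(Λc i = Λs i + 1 ∧ Ωs i = Λs i))))
    -- σ̃ interchanges the circle-square rows and the new-circle rows:
    (hσt1 : ((Finset.univ : Finset (Fin N)).filter
          (fun i => Ωs i = Λs i + 1 ∧ Λc i = Λs i + 1)).image σt
        = (Finset.univ : Finset (Fin N)).filter
            (fun i => Ωc i = Ωs i + 1 ∧ ¬(Λc i = Λs i + 1 ∧ Ωs i = Λs i)))
    (hσt2 : ((Finset.univ : Finset (Fin N)).filter
          (fun i => Ωc i = Ωs i + 1 ∧ ¬(Λc i = Λs i + 1 ∧ Ωs i = Λs i))).image σt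
        = (Finset.univ : Finset (Fin N)).filter
            (fun i => Ωs i = Λs i + 1 ∧ Λc i = Λs i + 1))
    -- and fixes all remaining rows:
    (hσt3 : ∀ i : Fin N, ¬(Ωs i = Λs i + 1 ∧ Λc i = Λs i + 1) →
        ¬(Ωc i = Ωs i + 1 ∧ ¬(Λc i = Λs i + 1 ∧ Ωs i = Λs i)) → σt i = i) :
    -- conclusion: J = w⁻¹ σ̃ (J̃) ⊆ [m+1, N]
    ∀ j ∈ ((Finset.univ : Finset (Fin N)).filter (fun i => Ωs i = Λs i + 1)).image
        (fun i => w⁻¹ (σt i)),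
      m ≤ (j : ℕ) := by
  intro j hj
  simp only [mem_image, mem_filter, mem_univ, true_and] at hj
  obtain ⟨i, hi, rfl⟩ := hj
  -- key: σt i has no circle in Λ
  have key : ¬ (Λc (σt i) = Λs (σt i) + 1) := by
    by_cases hcs : Λc i = Λs i + 1
    · -- circle-square row: σt i is a new-circle row
      have hmem : σt i ∈ ((Finset.univ : Finset (Fin N)).filter
          (fun i => Ωs i = Λs i + 1 ∧ Λc i = Λs i + 1)).image σt := by
        exact mem_image_of_mem σt (by simp [hi, hcs])
      rw [hσt1] at hmem
      simp only [mem_filter, mem_univ, true_and] at hmem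
      intro hc
      have hstep : Ωs (σt i) = Λs (σt i) + 1 := by
        rcases hs01 (σt i) with h | h
        · exact absurd ⟨hc, h⟩ hmem.2
        · exact h
      exact htypeI (σt i) ⟨⟨hstep, hc⟩, hmem⟩
    · -- plain-square row
      have hΛeq : Λc i = Λs i := (hΛ01 i).resolve_right hcs
      have hnc : ¬(Ωc i = Ωs i + 1 ∧ ¬(Λc i = Λs i + 1 ∧ Ωs i = Λs i)) := by
        rintro ⟨h1, -⟩
        rcases hc01 i with h | h <;> omega
      rw [hσt3 i (fun h => hcs h.2) hnc]
      exact hcs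
  by_contra hlt
  push_neg at hlt
  have : σt i ∈ ((Finset.univ : Finset (Fin N)).filter
      (fun j : Fin N => (j : ℕ) < m)).image w := by
    refine mem_image.mpr ⟨w⁻¹ (σt i), by simpa using hlt, by simp⟩
  rw [← hw] at this
  simp only [mem_filter, mem_univ, true_and] at this
  exact key this
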